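/- Mean-payoff games on finite game arenas are positionally determined: for every finite game arena Γ and every state s, Val*(s) = Val_*(s) =: Val(s), and there exist a positional Min strategy μ* and a positional Max strategy χ* such that for every state s, sup over Max strategies χ of A_Min(Run(s, μ*, χ)) = Val(s) and inf over Min strategies μ of A_Max(Run(s, μ, χ*)) = Val(s). -/

import Mathlib

open Filter
open scoped Classical

/-- A (turn-based, possibly infinite) game arena: states are partitioned into
Min-states (`isMin s`) and Max-states (`¬ isMin s`); `avail s` is the nonempty
set of actions available at `s`; `tr` and `price` are the transition and price
functions (their values only matter on available actions). -/
structure GameArena (S A : Type) where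
  isMin : S → Prop
  avail : S → Set A
  avail_nonempty : ∀ s, (avail s).Nonempty
  tr : S → A → S
  price : S → A → ℝ

namespace GameArena

variable {S A : Type}

/-- A finite play: the initial state together with the list of (action, state)
steps taken so far, most recent step first. -/
abbrev FinPlay (S A : Type) := S × List (A × S)

/-- The last state of a finite play. -/
def last (ρ : FinPlay S A) : S :=
  match ρ.2 with
  | [] => ρ.1
  | (_, s) :: _ => s

/-- A strategy of player Min: on every finite play ending in a Min state it
chooses an available action. -/
def IsMinStrategy (Γ : GameArena S A) (μ : FinPlay S A → A) : Prop :=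
  ∀ ρ : FinPlay S A, Γ.isMin (last ρ) → μ ρ ∈ Γ.avail (last ρ)

/-- A strategy of player Max: on every finite play ending in a Max state it
chooses an available action. -/
def IsMaxStrategy (Γ : GameArena S A) (χ : FinPlay S A → A) : Prop :=
  ∀ ρ : FinPlay S A, ¬ Γ.isMin (last ρ) → χ ρ ∈ Γ.avail (last ρ)

/-- A strategy is positional if its choice depends only on the last state. -/
def Positional (σ : FinPlay S A → A) : Prop :=
  ∀ ρ ρ' : FinPlay S A, last ρ = last ρ' → σ ρ = σ ρ'

/-- The finite prefixes of the unique play from `s` in which Min plays `μ`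
and Max plays `χ`. -/
noncomputable def hist (Γ : GameArena S A) (μ χ : FinPlay S A → A) (s : S) :
    ℕ → FinPlay S A
  | 0 => (s, [])
  | n + 1 =>
      let ρ := Γ.hist μ χ s n
      let a := if Γ.isMin (last ρ) then μ ρ else χ ρ
      (ρ.1, (a, Γ.tr (last ρ) a) :: ρ.2)

/-- The `n`-th state of the run `Run(s, μ, χ)`. -/
noncomputable def runState (Γ : GameArena S A) (μ χ : FinPlay S A → A) (s : S)
    (n : ℕ) : S :=
  last (Γ.hist μ χ s n)

/-- The action taken from the `n`-th state of the run `Run(s, μ, χ)`. -/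
noncomputable def runAct (Γ : GameArena S A) (μ χ : FinPlay S A → A) (s : S)
    (n : ℕ) : A :=
  if Γ.isMin (last (Γ.hist μ χ s n)) then μ (Γ.hist μ χ s n)
  else χ (Γ.hist μ χ s n)

/-- Cesàro average of the first `n` prices along the run `Run(s, μ, χ)`. -/
noncomputable def avg (Γ : GameArena S A) (μ χ : FinPlay S A → A) (s : S)
    (n : ℕ) : ℝ :=
  (∑ i ∈ Finset.range n, Γ.price (Γ.runState μ χ s i) (Γ.runAct μ χ s i)) / n

/-- `A_Min(Run(s, μ, χ))`: the limsup of the Cesàro averages of prices. -/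
noncomputable def AMin (Γ : GameArena S A) (μ χ : FinPlay S A → A) (s : S) :
    EReal :=
  Filter.limsup (fun n => ((Γ.avg μ χ s n : ℝ) : EReal)) atTop

/-- `A_Max(Run(s, μ, χ))`: the liminf of the Cesàro averages of prices. -/
noncomputable def AMax (Γ : GameArena S A) (μ χ : FinPlay S A → A) (s : S) :
    EReal :=
  Filter.liminf (fun n => ((Γ.avg μ χ s n : ℝ) : EReal)) atTop

/-- The upper value `Val*` of the mean-payoff game. -/
noncomputable def upperVal (Γ : GameArena S A) (s : S) : EReal :=
  ⨅ μ : {μ // Γ.IsMinStrategy μ}, ⨆ χ : {χ // Γ.IsMaxStrategy χ},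
    Γ.AMin μ.1 χ.1 s

/-- The lower value `Val_*` of the mean-payoff game. -/
noncomputable def lowerVal (Γ : GameArena S A) (s : S) : EReal :=
  ⨆ χ : {χ // Γ.IsMaxStrategy χ}, ⨅ μ : {μ // Γ.IsMinStrategy μ},
    Γ.AMax μ.1 χ.1 s

/-- `(G, B) ⊨ Opt(Γ)`: gain and bias optimality equations, together with the
nonemptiness of the sets of gain-preserving actions. -/
def SatOpt (Γ : GameArena S A) (G B : S → ℝ) : Prop :=
  ∀ s : S,
    (Γ.isMin s →
      G s = sInf {x | ∃ a ∈ Γ.avail s, x = G (Γ.tr s a)} ∧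
      {a | a ∈ Γ.avail s ∧ G (Γ.tr s a) = G s}.Nonempty ∧
      B s = sInf {x | ∃ a ∈ Γ.avail s, G (Γ.tr s a) = G s ∧
              x = Γ.price s a - G s + B (Γ.tr s a)}) ∧
    (¬ Γ.isMin s →
      G s = sSup {x | ∃ a ∈ Γ.avail s, x = G (Γ.tr s a)} ∧
      {a | a ∈ Γ.avail s ∧ G (Γ.tr s a) = G s}.Nonempty ∧
      B s = sSup {x | ∃ a ∈ Γ.avail s, G (Γ.tr s a) = G s ∧
              x = Γ.price s a - G s + B (Γ.tr s a)})

end GameArena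

open Filter Topology


namespace MPGAux

lemma summable_aux (x : ℝ) (hx : x ∈ Set.Ioo (0:ℝ) 1) (τ : ℕ → ℝ) (M : ℝ)
    (hτ : ∀ i, |τ i| ≤ M) : Summable (fun i => x ^ i * τ i) := by
  have hsg : Summable (fun i : ℕ => M * x ^ i) :=
    (summable_geometric_of_lt_one (le_of_lt hx.1) hx.2).mul_left M
  refine Summable.of_norm_bounded hsg (fun i => ?_)
  have hxi : (0:ℝ) ≤ x ^ i := pow_nonneg (le_of_lt hx.1) i
  calc ‖x ^ i * τ i‖ = x ^ i * |τ i| := by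
        rw [norm_mul, Real.norm_eq_abs, Real.norm_eq_abs, abs_of_nonneg hxi]
    _ ≤ x ^ i * M := mul_le_mul_of_nonneg_left (hτ i) hxi
    _ = M * x ^ i := mul_comm _ _

lemma geom_one_sub (x : ℝ) (m : ℕ) :
    x ^ m = 1 - (1 - x) * ∑ i ∈ Finset.range m, x ^ i := by
  have := geom_sum_mul x m
  nlinarith [this]

theorem ep (ρ : ℕ → ℝ) (M : ℝ) (hM : ∀ i, |ρ i| ≤ M) (p c : ℕ) (hc : 0 < c)
    (hper : ∀ n, ρ (p + n + c) = ρ (p + n)) :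
    Tendsto (fun x : ℝ => (1 - x) * ∑' i, x ^ i * ρ i) (𝓝[Set.Ioo (0:ℝ) 1] 1)
      (𝓝 ((∑ j ∈ Finset.range c, ρ (p + j)) / c)) ∧
    ∃ Bv : ℝ, Tendsto
      (fun x : ℝ => (∑' i, x ^ i * ρ i) -
        ((∑ j ∈ Finset.range c, ρ (p + j)) / c) / (1 - x))
      (𝓝[Set.Ioo (0:ℝ) 1] 1) (𝓝 Bv) := by
  classical
  set l := 𝓝[Set.Ioo (0:ℝ) 1] (1:ℝ) with hl
  set Gv : ℝ := (∑ j ∈ Finset.range c, ρ (p + j)) / c with hGv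
  set P : ℝ → ℝ := fun x => ∑ i ∈ Finset.range p, x ^ i * ρ i with hP
  set Q : ℝ → ℝ := fun x => ∑ j ∈ Finset.range c, x ^ j * ρ (p + j) with hQ
  set D : ℝ → ℝ := fun x => ∑ i ∈ Finset.range c, x ^ i with hD
  set E : ℝ → ℝ := fun x =>
    Gv * (∑ i ∈ Finset.range c, ∑ k ∈ Finset.range i, x ^ k) -
      ∑ j ∈ Finset.range c, ρ (p + j) * ∑ i ∈ Finset.range (p + j), x ^ i with hE
  have hcR : (c:ℝ) ≠ 0 := Nat.cast_ne_zero.2 hc.ne'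
  have hsumc : ∑ j ∈ Finset.range c, ρ (p + j) = Gv * c := by
    rw [hGv]; field_simp
  -- basic facts for x ∈ Ioo 0 1
  have key : ∀ x ∈ Set.Ioo (0:ℝ) 1,
      (∑' i, x ^ i * ρ i) = P x + x ^ p * (Q x / ((1 - x) * D x)) ∧
      (1 - x) * D x = 1 - x ^ c ∧ 0 < D x := by
    intro x hx
    have hD1 : (1 - x) * D x = 1 - x ^ c := by
      have := geom_sum_mul x c
      rw [hD]; nlinarith [this]
    have hDpos : 0 < D x := by
      rw [hD]
      exact Finset.sum_pos (fun i _ => pow_pos hx.1 i) (by simp [hc.ne'])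
    have hxc : x ^ c < 1 := pow_lt_one₀ (le_of_lt hx.1) hx.2 hc.ne'
    have hne : (1:ℝ) - x ^ c ≠ 0 := by linarith
    have hs : Summable (fun i => x ^ i * ρ i) := summable_aux x hx ρ M hM
    have hs' : Summable (fun i => x ^ i * ρ (p + i)) :=
      summable_aux x hx (fun i => ρ (p + i)) M (fun i => hM _)
    -- tail splitting
    have h1 : (∑' i, x ^ i * ρ i)
        = P x + x ^ p * ∑' i, x ^ i * ρ (p + i) := by
      rw [hP, ← Summable.sum_add_tsum_nat_add (f := fun i => x ^ i * ρ i) p hs]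
      congr 1
      rw [← tsum_mul_left]
      refine tsum_congr fun i => ?_
      show x ^ (i + p) * ρ (i + p) = x ^ p * (x ^ i * ρ (p + i))
      rw [add_comm i p, pow_add]; ring
    -- periodicity: (1 - x^c) * Wp = Q x
    have h2 : (1 - x ^ c) * (∑' i, x ^ i * ρ (p + i)) = Q x := by
      have hshift : (∑' i, x ^ (i + c) * ρ (p + (i + c)))
          = x ^ c * ∑' i, x ^ i * ρ (p + i) := by
        rw [← tsum_mul_left]
        refine tsum_congr fun i => ?_
        have hρ : ρ (p + (i + c)) = ρ (p + i) := by
          rw [show p + (i + c) = p + i + c by ring, hper i]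
        rw [hρ, pow_add]; ring
      have hsplit := Summable.sum_add_tsum_nat_add (f := fun i => x ^ i * ρ (p + i)) c hs'
      rw [hQ]
      have : (∑' (i : ℕ), (fun i => x ^ i * ρ (p + i)) (i + c))
          = x ^ c * ∑' i, x ^ i * ρ (p + i) := hshift
      rw [this] at hsplit
      linarith [hsplit]
    have h3 : (∑' i, x ^ i * ρ (p + i)) = Q x / ((1 - x) * D x) := by
      rw [hD1, eq_div_iff hne, mul_comm, h2]
    exact ⟨by rw [h1, h3], hD1, hDpos⟩
  -- limits of polynomial pieces
  have tendsto_poly : ∀ (n : ℕ), Tendsto (fun x : ℝ => x ^ n) l (𝓝 1) := by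
    intro n
    have : Tendsto (fun x : ℝ => x ^ n) (𝓝 1) (𝓝 ((1:ℝ) ^ n)) :=
      ((continuous_pow n).tendsto 1)
    simpa using this.mono_left nhdsWithin_le_nhds
  have tendsto_geom : ∀ (m : ℕ),
      Tendsto (fun x : ℝ => ∑ i ∈ Finset.range m, x ^ i) l (𝓝 (m : ℝ)) := by
    intro m
    have : Tendsto (fun x : ℝ => ∑ i ∈ Finset.range m, x ^ i) l
        (𝓝 (∑ i ∈ Finset.range m, (1:ℝ))) :=
      tendsto_finset_sum _ (fun i _ => by simpa using tendsto_poly i)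
    simpa using this
  have tP : Tendsto P l (𝓝 (∑ i ∈ Finset.range p, ρ i)) := by
    have : Tendsto P l (𝓝 (∑ i ∈ Finset.range p, (1:ℝ) * ρ i)) := by
      refine tendsto_finset_sum _ (fun i _ => ?_)
      exact (tendsto_poly i).mul tendsto_const_nhds
    simpa using this
  have tQ : Tendsto Q l (𝓝 (Gv * c)) := by
    have : Tendsto Q l (𝓝 (∑ j ∈ Finset.range c, (1:ℝ) * ρ (p + j))) := by
      refine tendsto_finset_sum _ (fun j _ => ?_)
      exact (tendsto_poly j).mul tendsto_const_nhds
    simpa [hsumc] using this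
  have tD : Tendsto D l (𝓝 (c : ℝ)) := tendsto_geom c
  have tx : Tendsto (fun x : ℝ => x) l (𝓝 1) :=
    tendsto_id.mono_left nhdsWithin_le_nhds
  have t1x : Tendsto (fun x : ℝ => 1 - x) l (𝓝 0) := by
    have h1 : Tendsto (fun _ : ℝ => (1:ℝ)) l (𝓝 1) := tendsto_const_nhds
    simpa using h1.sub tx
  have hmem : ∀ᶠ x in l, x ∈ Set.Ioo (0:ℝ) 1 := eventually_mem_nhdsWithin
  constructor
  · -- part (a)
    have tmain : Tendsto (fun x : ℝ => (1 - x) * P x + x ^ p * (Q x / D x)) l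
        (𝓝 (0 * (∑ i ∈ Finset.range p, ρ i) + 1 * (Gv * ↑c / ↑c))) :=
      ((t1x.mul tP)).add ((tendsto_poly p).mul (tQ.div tD hcR))
    have heq : ∀ᶠ x in l,
        (fun x : ℝ => (1 - x) * P x + x ^ p * (Q x / D x)) x
          = (1 - x) * ∑' i, x ^ i * ρ i := by
      filter_upwards [hmem] with x hx
      obtain ⟨hW, hD1, hDpos⟩ := key x hx
      have hx1 : (1:ℝ) - x ≠ 0 := by have := hx.2; intro h; linarith [hx.2]
      rw [hW]
      field_simp
    have hlim : Tendsto (fun x : ℝ => (1 - x) * ∑' i, x ^ i * ρ i) l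
        (𝓝 (0 * (∑ i ∈ Finset.range p, ρ i) + 1 * (Gv * ↑c / ↑c))) :=
      Tendsto.congr' heq tmain
    have hval : 0 * (∑ i ∈ Finset.range p, ρ i) + 1 * (Gv * ↑c / ↑c) = Gv := by
      field_simp
      ring
    rwa [hval] at hlim
  · -- part (b)
    refine ⟨(∑ i ∈ Finset.range p, ρ i) +
      (Gv * (∑ i ∈ Finset.range c, (i:ℝ)) -
        ∑ j ∈ Finset.range c, ρ (p + j) * (p + j : ℕ)) / c, ?_⟩
    have tE : Tendsto E l (𝓝 (Gv * (∑ i ∈ Finset.range c, (i:ℝ)) -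
        ∑ j ∈ Finset.range c, ρ (p + j) * (p + j : ℕ))) := by
      have t1 : Tendsto (fun x : ℝ => ∑ i ∈ Finset.range c,
          ∑ k ∈ Finset.range i, x ^ k) l (𝓝 (∑ i ∈ Finset.range c, (i:ℝ))) :=
        tendsto_finset_sum _ (fun i _ => tendsto_geom i)
      have t2 : Tendsto (fun x : ℝ => ∑ j ∈ Finset.range c,
          ρ (p + j) * ∑ i ∈ Finset.range (p + j), x ^ i) l
          (𝓝 (∑ j ∈ Finset.range c, ρ (p + j) * ((p + j : ℕ) : ℝ))) :=
        tendsto_finset_sum _ (fun j _ => tendsto_const_nhds.mul (tendsto_geom (p + j)))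
      exact (tendsto_const_nhds.mul t1).sub t2
    have tmain : Tendsto (fun x : ℝ => P x + E x / D x) l
        (𝓝 ((∑ i ∈ Finset.range p, ρ i) +
          (Gv * (∑ i ∈ Finset.range c, (i:ℝ)) -
            ∑ j ∈ Finset.range c, ρ (p + j) * (p + j : ℕ)) / c)) :=
      tP.add (tE.div tD hcR)
    refine Tendsto.congr' ?_ tmain
    filter_upwards [hmem] with x hx
    obtain ⟨hW, hD1, hDpos⟩ := key x hx
    have hx1 : (1:ℝ) - x ≠ 0 := by intro h; have := hx.2; linarith
    have hDne : D x ≠ 0 := ne_of_gt hDpos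
    -- key polynomial identity: x^p * Q x - Gv * D x = (1 - x) * E x
    have hpoly : x ^ p * Q x - Gv * D x = (1 - x) * E x := by
      have hQx : x ^ p * Q x = ∑ j ∈ Finset.range c,
          (1 - (1 - x) * ∑ i ∈ Finset.range (p + j), x ^ i) * ρ (p + j) := by
        rw [hQ, Finset.mul_sum]
        refine Finset.sum_congr rfl (fun j _ => ?_)
        rw [← geom_one_sub x (p + j), pow_add]; ring
      have hDx : Gv * D x = ∑ i ∈ Finset.range c,
          Gv * (1 - (1 - x) * ∑ k ∈ Finset.range i, x ^ k) := by
        rw [hD, Finset.mul_sum]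
        refine Finset.sum_congr rfl (fun i _ => ?_)
        rw [← geom_one_sub x i]
      rw [hQx, hDx, hE]
      have e1 : ∑ j ∈ Finset.range c,
          (1 - (1 - x) * ∑ i ∈ Finset.range (p + j), x ^ i) * ρ (p + j)
          = (∑ j ∈ Finset.range c, ρ (p + j)) -
            (1 - x) * ∑ j ∈ Finset.range c,
              ρ (p + j) * ∑ i ∈ Finset.range (p + j), x ^ i := by
        have lhs_eq : ∑ j ∈ Finset.range c,
            (1 - (1 - x) * ∑ i ∈ Finset.range (p + j), x ^ i) * ρ (p + j)
            = ∑ j ∈ Finset.range c, (ρ (p + j) -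
              (1 - x) * (ρ (p + j) * ∑ i ∈ Finset.range (p + j), x ^ i)) :=
          Finset.sum_congr rfl fun j _ => by ring
        rw [lhs_eq, Finset.sum_sub_distrib, ← Finset.mul_sum]
      have e2 : ∑ i ∈ Finset.range c,
          Gv * (1 - (1 - x) * ∑ k ∈ Finset.range i, x ^ k)
          = Gv * c - (1 - x) * (Gv * ∑ i ∈ Finset.range c,
              ∑ k ∈ Finset.range i, x ^ k) := by
        have lhs_eq : ∑ i ∈ Finset.range c,
            Gv * (1 - (1 - x) * ∑ k ∈ Finset.range i, x ^ k)
            = ∑ i ∈ Finset.range c, (Gv -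
              (1 - x) * (Gv * ∑ k ∈ Finset.range i, x ^ k)) :=
          Finset.sum_congr rfl fun i _ => by ring
        rw [lhs_eq, Finset.sum_sub_distrib, Finset.sum_const, Finset.card_range,
          nsmul_eq_mul, ← Finset.mul_sum, ← Finset.mul_sum]
        ring
      rw [e1, e2, hsumc]; ring
    -- now the full identity
    rw [hW]
    have h4 : x ^ p * (Q x / ((1 - x) * D x)) - Gv / (1 - x) = E x / D x := by
      have hne2 : (1 - x) * D x ≠ 0 := mul_ne_zero hx1 hDne
      rw [← mul_div_assoc, div_sub_div _ _ hne2 hx1,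
        div_eq_div_iff (mul_ne_zero hne2 hx1) hDne]
      linear_combination ((1 - x) * D x) * hpoly
    linarith [h4]

end MPGAux



namespace MPGAux2

lemma csInf_image_diff {α : Type} (X : Set α) (hX : X.Finite) (hne : X.Nonempty)
    (g h : α → ℝ) (ε : ℝ) (hgh : ∀ a ∈ X, |g a - h a| ≤ ε) :
    |sInf (g '' X) - sInf (h '' X)| ≤ ε := by
  rw [abs_sub_le_iff]
  constructor
  · obtain ⟨a, ha, hval⟩ := (hne.image h).csInf_mem (hX.image h)
    have h1 : sInf (g '' X) ≤ g a := csInf_le ((hX.image g).bddBelow) ⟨a, ha, rfl⟩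
    have h2 := hgh a ha
    rw [abs_sub_le_iff] at h2
    rw [← hval]; linarith [h1, h2.1]
  · obtain ⟨a, ha, hval⟩ := (hne.image g).csInf_mem (hX.image g)
    have h1 : sInf (h '' X) ≤ h a := csInf_le ((hX.image h).bddBelow) ⟨a, ha, rfl⟩
    have h2 := hgh a ha
    rw [abs_sub_le_iff] at h2
    rw [← hval]; linarith [h1, h2.2]

lemma csSup_image_diff {α : Type} (X : Set α) (hX : X.Finite) (hne : X.Nonempty)
    (g h : α → ℝ) (ε : ℝ) (hgh : ∀ a ∈ X, |g a - h a| ≤ ε) :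
    |sSup (g '' X) - sSup (h '' X)| ≤ ε := by
  rw [abs_sub_le_iff]
  constructor
  · obtain ⟨a, ha, hval⟩ := (hne.image g).csSup_mem (hX.image g)
    have h1 : h a ≤ sSup (h '' X) := le_csSup ((hX.image h).bddAbove) ⟨a, ha, rfl⟩
    have h2 := hgh a ha
    rw [abs_sub_le_iff] at h2
    rw [← hval]; linarith [h1, h2.1]
  · obtain ⟨a, ha, hval⟩ := (hne.image h).csSup_mem (hX.image h)
    have h1 : g a ≤ sSup (g '' X) := le_csSup ((hX.image g).bddAbove) ⟨a, ha, rfl⟩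
    have h2 := hgh a ha
    rw [abs_sub_le_iff] at h2
    rw [← hval]; linarith [h1, h2.2]

lemma dfp {S A : Type} [Finite S] [Finite A] (Γ : GameArena S A) [Nonempty S]
    (lam : ℝ) (hlam : lam ∈ Set.Ioo (0:ℝ) 1) :
    ∃ (v : S → ℝ) (σ : S → A),
      (∀ s, σ s ∈ Γ.avail s) ∧
      (∀ s, v s = Γ.price s (σ s) + lam * v (Γ.tr s (σ s))) ∧
      (∀ s a, a ∈ Γ.avail s → Γ.isMin s →
        v s ≤ Γ.price s a + lam * v (Γ.tr s a)) ∧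
      (∀ s a, a ∈ Γ.avail s → ¬ Γ.isMin s →
        Γ.price s a + lam * v (Γ.tr s a) ≤ v s) := by
  classical
  haveI : Fintype S := Fintype.ofFinite S
  set img : (S → ℝ) → S → Set ℝ :=
    fun v s => (fun a => Γ.price s a + lam * v (Γ.tr s a)) '' Γ.avail s with himg
  have himgfin : ∀ v s, (img v s).Finite := fun v s => (Set.toFinite _).image _
  have himgne : ∀ v s, (img v s).Nonempty := fun v s => (Γ.avail_nonempty s).image _
  set F : (S → ℝ) → (S → ℝ) :=
    fun v s => if Γ.isMin s then sInf (img v s) else sSup (img v s) with hF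
  set K : NNReal := ⟨lam, hlam.1.le⟩ with hK
  have hKlt : K < 1 := by
    rw [← NNReal.coe_lt_coe]; exact hlam.2
  have hcontr : ContractingWith K F := by
    refine ⟨hKlt, LipschitzWith.of_dist_le_mul (fun v w => ?_)⟩
    have hKc : (K : ℝ) = lam := rfl
    rw [hKc]
    rw [dist_pi_le_iff (mul_nonneg hlam.1.le dist_nonneg)]
    intro s
    have hptw : ∀ a ∈ Γ.avail s,
        |(Γ.price s a + lam * v (Γ.tr s a)) - (Γ.price s a + lam * w (Γ.tr s a))|
          ≤ lam * dist v w := by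
      intro a _
      have h1 : dist (v (Γ.tr s a)) (w (Γ.tr s a)) ≤ dist v w :=
        dist_le_pi_dist v w (Γ.tr s a)
      rw [Real.dist_eq] at h1
      have : (Γ.price s a + lam * v (Γ.tr s a)) - (Γ.price s a + lam * w (Γ.tr s a))
          = lam * (v (Γ.tr s a) - w (Γ.tr s a)) := by ring
      rw [this, abs_mul, abs_of_nonneg hlam.1.le]
      exact mul_le_mul_of_nonneg_left h1 hlam.1.le
    rw [Real.dist_eq, hF]
    by_cases hmin : Γ.isMin s
    · simp only [hmin, if_true]
      exact csInf_image_diff _ (Set.toFinite _) (Γ.avail_nonempty s) _ _ _ hptw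
    · simp only [hmin, if_false]
      exact csSup_image_diff _ (Set.toFinite _) (Γ.avail_nonempty s) _ _ _ hptw
  set v : S → ℝ := ContractingWith.fixedPoint F hcontr with hv
  have hfix : F v = v := hcontr.fixedPoint_isFixedPt
  have hfixs : ∀ s, v s = F v s := fun s => (congrFun hfix s).symm
  have hσ : ∀ s, ∃ a, a ∈ Γ.avail s ∧
      v s = Γ.price s a + lam * v (Γ.tr s a) := by
    intro s
    by_cases hmin : Γ.isMin s
    · have : sInf (img v s) ∈ img v s := (himgne v s).csInf_mem (himgfin v s)
      obtain ⟨a, ha, hval⟩ := this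
      exact ⟨a, ha, by rw [hfixs s, hF]; simp only [hmin, if_true]; exact hval.symm⟩
    · have : sSup (img v s) ∈ img v s := (himgne v s).csSup_mem (himgfin v s)
      obtain ⟨a, ha, hval⟩ := this
      exact ⟨a, ha, by rw [hfixs s, hF]; simp only [hmin, if_false]; exact hval.symm⟩
  choose σ hσ1 hσ2 using hσ
  refine ⟨v, σ, hσ1, hσ2, ?_, ?_⟩
  · intro s a ha hmin
    rw [hfixs s, hF]
    simp only [hmin, if_true]
    exact csInf_le ((himgfin v s).bddBelow) ⟨a, ha, rfl⟩
  · intro s a ha hmin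
    rw [hfixs s, hF]
    simp only [hmin, if_false]
    exact le_csSup ((himgfin v s).bddAbove) ⟨a, ha, rfl⟩

end MPGAux2

namespace MPGAux

theorem struct {S A : Type} [Finite S] [Finite A] (Γ : GameArena S A) [Nonempty S] :
    ∃ (G B : S → ℝ) (σ : S → A),
      (∀ s, σ s ∈ Γ.avail s) ∧
      (∀ s, G (Γ.tr s (σ s)) = G s ∧
        Γ.price s (σ s) - G s + B (Γ.tr s (σ s)) = B s) ∧
      (∀ s a, a ∈ Γ.avail s → Γ.isMin s →
        G s ≤ G (Γ.tr s a) ∧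
        (G (Γ.tr s a) = G s → B s ≤ Γ.price s a - G s + B (Γ.tr s a))) ∧
      (∀ s a, a ∈ Γ.avail s → ¬ Γ.isMin s →
        G (Γ.tr s a) ≤ G s ∧
        (G (Γ.tr s a) = G s → Γ.price s a - G s + B (Γ.tr s a) ≤ B s)) := by
  classical
  -- discount sequence
  set lam : ℕ → ℝ := fun k => 1 - 1 / (k + 2) with hlamdef
  have hlam : ∀ k, lam k ∈ Set.Ioo (0:ℝ) 1 := by
    intro k
    have h2 : (0:ℝ) < (k:ℝ) + 2 := by positivity
    have h3 : 1 / ((k:ℝ) + 2) ≤ 1 / 2 := by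
      rw [div_le_div_iff₀ h2 (by norm_num)]
      have := Nat.cast_nonneg (α := ℝ) k
      linarith
    have h4 : 0 < 1 / ((k:ℝ) + 2) := by positivity
    simp only [hlamdef, Set.mem_Ioo]
    constructor <;> linarith
  have tlamnhds : Tendsto lam atTop (𝓝 1) := by
    have h1 : Tendsto (fun k : ℕ => (k:ℝ) + 2) atTop atTop :=
      tendsto_atTop_add_const_right _ 2 tendsto_natCast_atTop_atTop
    have h2 : Tendsto (fun k : ℕ => 1 / ((k:ℝ) + 2)) atTop (𝓝 0) := by
      simp only [one_div]; exact h1.inv_tendsto_atTop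
    have h3 := Tendsto.sub
      (tendsto_const_nhds : Tendsto (fun _ : ℕ => (1:ℝ)) atTop (𝓝 1)) h2
    simp only [sub_zero] at h3
    exact h3
  have tlam : Tendsto lam atTop (𝓝[Set.Ioo (0:ℝ) 1] 1) := by
    rw [tendsto_nhdsWithin_iff]
    exact ⟨tlamnhds, Eventually.of_forall hlam⟩
  -- discounted solutions
  choose v σfam havail hbell hmin hmax using fun k => MPGAux2.dfp Γ (lam k) (hlam k)
  -- pigeonhole a fixed policy
  obtain ⟨σ, hfib⟩ := Finite.exists_infinite_fiber σfam
  have hinf : {k | σfam k = σ}.Infinite := by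
    rw [← Set.infinite_coe_iff]
    have hpe : σfam ⁻¹' {σ} = {k | σfam k = σ} := by ext k; simp
    rw [← hpe]
    exact hfib
  set φ : ℕ → ℕ := Nat.nth (fun k => σfam k = σ) with hφdef
  have hφmono : StrictMono φ := Nat.nth_strictMono hinf
  have hφσ : ∀ j, σfam (φ j) = σ := fun j => Nat.nth_mem_of_infinite hinf j
  set lamφ : ℕ → ℝ := fun j => lam (φ j) with hlamφdef
  have tlamφ : Tendsto lamφ atTop (𝓝[Set.Ioo (0:ℝ) 1] 1) :=
    tlam.comp hφmono.tendsto_atTop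
  have tlamφR : Tendsto lamφ atTop (𝓝 1) := tlamφ.mono_right nhdsWithin_le_nhds
  have hlamφ : ∀ j, lamφ j ∈ Set.Ioo (0:ℝ) 1 := fun j => hlam (φ j)
  -- the fixed policy dynamics
  set f : S → S := fun s => Γ.tr s (σ s) with hfdef
  set r : S → ℝ := fun s => Γ.price s (σ s) with hrdef
  obtain ⟨M, hMb⟩ := Finite.exists_le (fun s => |r s|)
  set ρs : S → ℕ → ℝ := fun s i => r (f^[i] s) with hρdef
  have hρM : ∀ s i, |ρs s i| ≤ M := fun s i => hMb _
  -- eventual periodicity of orbits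
  have hpc : ∀ s : S, ∃ p c : ℕ, 0 < c ∧ f^[p + c] s = f^[p] s := by
    intro s
    obtain ⟨i, j, hij, heq⟩ := Finite.exists_ne_map_eq_of_infinite (fun n => f^[n] s)
    rcases lt_or_gt_of_ne hij with h | h
    · exact ⟨i, j - i, by omega, by rw [show i + (j - i) = j by omega]; exact heq.symm⟩
    · exact ⟨j, i - j, by omega, by rw [show j + (i - j) = i by omega]; exact heq⟩
  choose ps cs hcs hper0 using hpc
  have hper : ∀ s n, f^[ps s + n + cs s] s = f^[ps s + n] s := by
    intro s n
    have h1 : ps s + n + cs s = n + (ps s + cs s) := by omega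
    have h2 : ps s + n = n + ps s := by omega
    have e1 : f^[ps s + n + cs s] s = f^[n] (f^[ps s + cs s] s) := by
      rw [h1]; exact Function.iterate_add_apply f n (ps s + cs s) s
    have e2 : f^[ps s + n] s = f^[n] (f^[ps s] s) := by
      rw [h2]; exact Function.iterate_add_apply f n (ps s) s
    rw [e1, e2, hper0 s]
  have hperρ : ∀ s n, ρs s (ps s + n + cs s) = ρs s (ps s + n) := fun s n =>
    congrArg r (hper s n)
  -- gain and bias
  set G : S → ℝ := fun s => (∑ j ∈ Finset.range (cs s), ρs s (ps s + j)) / (cs s)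
    with hGdef
  have hep : ∀ s : S,
      Tendsto (fun x : ℝ => (1 - x) * ∑' i, x ^ i * ρs s i)
        (𝓝[Set.Ioo (0:ℝ) 1] 1) (𝓝 (G s)) ∧
      ∃ Bv : ℝ, Tendsto (fun x : ℝ => (∑' i, x ^ i * ρs s i) - G s / (1 - x))
        (𝓝[Set.Ioo (0:ℝ) 1] 1) (𝓝 Bv) :=
    fun s => ep (ρs s) M (hρM s) (ps s) (cs s) (hcs s) (hperρ s)
  have hBex : ∀ s : S, ∃ Bv : ℝ, Tendsto
      (fun x : ℝ => (∑' i, x ^ i * ρs s i) - G s / (1 - x))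
      (𝓝[Set.Ioo (0:ℝ) 1] 1) (𝓝 Bv) := fun s => (hep s).2
  choose B hBt using hBex
  -- W and the identification with discounted values along the subsequence
  set W : S → ℝ → ℝ := fun s x => ∑' i, x ^ i * ρs s i with hWdef
  have hWrec : ∀ (s : S) (x : ℝ), x ∈ Set.Ioo (0:ℝ) 1 →
      W s x = r s + x * W (f s) x := by
    intro s x hx
    have hs := summable_aux x hx (ρs s) M (hρM s)
    have h0 := Summable.tsum_eq_zero_add hs
    have h1 : (∑' i, x ^ (i + 1) * ρs s (i + 1)) = x * W (f s) x := by
      rw [hWdef, ← tsum_mul_left]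
      refine tsum_congr fun i => ?_
      have : ρs s (i + 1) = ρs (f s) i := by
        rw [hρdef]
        simp only []
        rw [Function.iterate_succ_apply]
      rw [this, pow_succ]
      ring
    rw [hWdef]
    simp only []
    rw [h0]
    simp only [pow_zero, one_mul]
    have : ρs s 0 = r s := by rw [hρdef]; simp
    rw [this, ← h1]
  have hlink : ∀ (j : ℕ) (s : S), v (φ j) s = W s (lamφ j) := by
    intro j
    set k := φ j with hk
    set u : S → ℝ := fun s => v k s - W s (lamφ j) with hudef
    have hurec : ∀ s, u s = lamφ j * u (f s) := by
      intro s
      have h1 : v k s = r s + lamφ j * v k (f s) := by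
        have := hbell k s
        rw [hφσ j] at this
        exact this
      have h2 := hWrec s (lamφ j) (hlamφ j)
      rw [hudef]
      simp only []
      rw [h1, h2]
      ring
    have hiter : ∀ (n : ℕ) (s : S), u s = (lamφ j) ^ n * u (f^[n] s) := by
      intro n
      induction n with
      | zero => intro s; simp
      | succ n ih =>
        intro s
        rw [hurec s, ih (f s), ← Function.iterate_succ_apply, pow_succ]
        ring
    obtain ⟨U, hU⟩ := Finite.exists_le (fun s => |u s|)
    have hzero : ∀ s, u s = 0 := by
      intro s
      have hb : ∀ n : ℕ, |u s| ≤ (lamφ j) ^ n * U := by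
        intro n
        rw [hiter n s, abs_mul, abs_of_nonneg (pow_nonneg (hlamφ j).1.le n)]
        exact mul_le_mul_of_nonneg_left (hU _) (pow_nonneg (hlamφ j).1.le n)
      have ht : Tendsto (fun n : ℕ => (lamφ j) ^ n * U) atTop (𝓝 0) := by
        have := tendsto_pow_atTop_nhds_zero_of_lt_one (hlamφ j).1.le (hlamφ j).2
        simpa using this.mul_const U
      have : |u s| ≤ 0 :=
        le_of_tendsto_of_tendsto tendsto_const_nhds ht (Eventually.of_forall hb)
      have := abs_nonneg (u s)
      have : |u s| = 0 := le_antisymm ‹|u s| ≤ 0› this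
      exact abs_eq_zero.mp this
    intro s
    have := hzero s
    rw [hudef] at this
    simp only [] at this
    linarith
  -- limits along the subsequence
  set vv : ℕ → S → ℝ := fun j s => v (φ j) s with hvvdef
  have L1 : ∀ s : S, Tendsto (fun j => (1 - lamφ j) * vv j s) atTop (𝓝 (G s)) := by
    intro s
    have := ((hep s).1).comp tlamφ
    refine this.congr fun j => ?_
    simp only [Function.comp_apply, hvvdef]
    rw [hlink j s]
  have L2 : ∀ s : S, Tendsto (fun j => vv j s - G s / (1 - lamφ j)) atTop
      (𝓝 (B s)) := by
    intro s
    have := (hBt s).comp tlamφ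
    refine this.congr fun j => ?_
    simp only [Function.comp_apply, hvvdef]
    rw [hlink j s]
  -- generic limit of RHS expressions
  have hRlim : ∀ (q : ℝ) (t : S), Tendsto
      (fun j => (1 - lamφ j) * (q + lamφ j * vv j t)) atTop (𝓝 (G t)) := by
    intro q t
    have h1 : Tendsto (fun j => (1 - lamφ j) * q + lamφ j * ((1 - lamφ j) * vv j t))
        atTop (𝓝 (0 * q + 1 * G t)) := by
      refine Tendsto.add (Tendsto.mul ?_ tendsto_const_nhds) (tlamφR.mul (L1 t))
      have h3 := Tendsto.sub
        (tendsto_const_nhds : Tendsto (fun _ : ℕ => (1:ℝ)) atTop (𝓝 1)) tlamφR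
      simpa using h3
    have h2 : (0:ℝ) * q + 1 * G t = G t := by ring
    rw [h2] at h1
    refine h1.congr fun j => ?_
    ring
  have hRlim2 : ∀ (q : ℝ) (t : S), Tendsto
      (fun j => q + (vv j t - G t / (1 - lamφ j)) - (1 - lamφ j) * vv j t) atTop
      (𝓝 (q + B t - G t)) := fun q t => (tendsto_const_nhds.add (L2 t)).sub (L1 t)
  have hpos1 : ∀ j, (0:ℝ) ≤ 1 - lamφ j := fun j => by linarith [(hlamφ j).2]
  -- gain inequality derivations
  have gle : ∀ (s : S) (a : A) (t : S), t = Γ.tr s a →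
      (∀ j, vv j s ≤ Γ.price s a + lamφ j * vv j t) → G s ≤ G t := by
    intro s a t ht hineq
    refine le_of_tendsto_of_tendsto (L1 s) (hRlim (Γ.price s a) t)
      (Eventually.of_forall fun j => ?_)
    exact mul_le_mul_of_nonneg_left (hineq j) (hpos1 j)
  have gge : ∀ (s : S) (a : A) (t : S), t = Γ.tr s a →
      (∀ j, Γ.price s a + lamφ j * vv j t ≤ vv j s) → G t ≤ G s := by
    intro s a t ht hineq
    refine le_of_tendsto_of_tendsto (hRlim (Γ.price s a) t) (L1 s)
      (Eventually.of_forall fun j => ?_)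
    exact mul_le_mul_of_nonneg_left (hineq j) (hpos1 j)
  have ble : ∀ (s : S) (a : A) (t : S), G t = G s →
      (∀ j, vv j s ≤ Γ.price s a + lamφ j * vv j t) →
      B s ≤ Γ.price s a - G s + B t := by
    intro s a t hGG hineq
    have key : ∀ j, vv j s - G s / (1 - lamφ j) ≤
        Γ.price s a + (vv j t - G t / (1 - lamφ j)) - (1 - lamφ j) * vv j t := by
      intro j
      have hexp : Γ.price s a + (vv j t - G t / (1 - lamφ j)) - (1 - lamφ j) * vv j t
          = Γ.price s a + lamφ j * vv j t - G t / (1 - lamφ j) := by ring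
      rw [hexp, hGG]
      exact sub_le_sub_right (hineq j) _
    have := le_of_tendsto_of_tendsto (L2 s) (hRlim2 (Γ.price s a) t)
      (Eventually.of_forall key)
    linarith [hGG, this]
  have bge : ∀ (s : S) (a : A) (t : S), G t = G s →
      (∀ j, Γ.price s a + lamφ j * vv j t ≤ vv j s) →
      Γ.price s a - G s + B t ≤ B s := by
    intro s a t hGG hineq
    have key : ∀ j, Γ.price s a + (vv j t - G t / (1 - lamφ j)) -
        (1 - lamφ j) * vv j t ≤ vv j s - G s / (1 - lamφ j) := by
      intro j
      have hexp : Γ.price s a + (vv j t - G t / (1 - lamφ j)) - (1 - lamφ j) * vv j t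
          = Γ.price s a + lamφ j * vv j t - G t / (1 - lamφ j) := by ring
      rw [hexp, hGG]
      exact sub_le_sub_right (hineq j) _
    have := le_of_tendsto_of_tendsto (hRlim2 (Γ.price s a) t) (L2 s)
      (Eventually.of_forall key)
    linarith [hGG, this]
  -- Bellman facts for vv
  have hbellvv : ∀ j s, vv j s = Γ.price s (σ s) + lamφ j * vv j (f s) := by
    intro j s
    have := hbell (φ j) s
    rw [hφσ j] at this
    exact this
  have hminvv : ∀ j s a, a ∈ Γ.avail s → Γ.isMin s →
      vv j s ≤ Γ.price s a + lamφ j * vv j (Γ.tr s a) := fun j s a ha hm =>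
    hmin (φ j) s a ha hm
  have hmaxvv : ∀ j s a, a ∈ Γ.avail s → ¬ Γ.isMin s →
      Γ.price s a + lamφ j * vv j (Γ.tr s a) ≤ vv j s := fun j s a ha hm =>
    hmax (φ j) s a ha hm
  have havailσ : ∀ s, σ s ∈ Γ.avail s := by
    intro s
    have := havail (φ 0) s
    rw [hφσ 0] at this
    exact this
  -- conclusion
  refine ⟨G, B, σ, havailσ, ?_, ?_, ?_⟩
  · intro s
    have hG1 : G (f s) = G s := by
      have h1 : G s ≤ G (f s) :=
        gle s (σ s) (f s) rfl (fun j => le_of_eq (hbellvv j s))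
      have h2 : G (f s) ≤ G s :=
        gge s (σ s) (f s) rfl (fun j => ge_of_eq (hbellvv j s))
      exact le_antisymm h2 h1
    constructor
    · exact hG1
    · have h1 : B s ≤ Γ.price s (σ s) - G s + B (f s) :=
        ble s (σ s) (f s) hG1 (fun j => le_of_eq (hbellvv j s))
      have h2 : Γ.price s (σ s) - G s + B (f s) ≤ B s :=
        bge s (σ s) (f s) hG1 (fun j => ge_of_eq (hbellvv j s))
      exact le_antisymm h2 h1
  · intro s a ha hm
    refine ⟨gle s a (Γ.tr s a) rfl (fun j => hminvv j s a ha hm), fun hGG => ?_⟩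
    exact ble s a (Γ.tr s a) hGG (fun j => hminvv j s a ha hm)
  · intro s a ha hm
    refine ⟨gge s a (Γ.tr s a) rfl (fun j => hmaxvv j s a ha hm), fun hGG => ?_⟩
    exact bge s a (Γ.tr s a) hGG (fun j => hmaxvv j s a ha hm)


end MPGAux


namespace MPGAux3

lemma core_sum_bound (g b pr : ℕ → ℝ) (Bm K : ℝ) (N : ℕ)
    (hg : ∀ n, g (n+1) ≤ g n)
    (hb : ∀ n, |b n| ≤ Bm)
    (hK : 0 ≤ K)
    (hpr : ∀ n, pr n ≤ g n + (b n - b (n+1)) + (if g (n+1) < g n then K else 0))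
    (hdrop : ∀ n, ((Finset.range n).filter (fun i => g (i+1) < g i)).card ≤ N) :
    ∀ n : ℕ, (∑ i ∈ Finset.range n, pr i) ≤ n * g 0 + 2*Bm + K*N := by
  intro n
  have hant : Antitone g := antitone_nat_of_succ_le hg
  have h1 : (∑ i ∈ Finset.range n, pr i) ≤
      ∑ i ∈ Finset.range n, (g i + (b i - b (i+1)) +
        (if g (i+1) < g i then K else 0)) :=
    Finset.sum_le_sum (fun i _ => hpr i)
  have h2 : ∑ i ∈ Finset.range n, (g i + (b i - b (i+1)) +
      (if g (i+1) < g i then K else 0))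
      = (∑ i ∈ Finset.range n, g i) + (b 0 - b n) +
        K * ((Finset.range n).filter (fun i => g (i+1) < g i)).card := by
    rw [Finset.sum_add_distrib, Finset.sum_add_distrib, Finset.sum_range_sub' b]
    congr 1
    rw [← Finset.sum_filter, Finset.sum_const, nsmul_eq_mul]
    ring
  have h3 : (∑ i ∈ Finset.range n, g i) ≤ n * g 0 := by
    calc (∑ i ∈ Finset.range n, g i) ≤ ∑ _i ∈ Finset.range n, g 0 :=
          Finset.sum_le_sum (fun i _ => hant (Nat.zero_le i))
      _ = n * g 0 := by rw [Finset.sum_const, Finset.card_range, nsmul_eq_mul]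
  have h4 : b 0 - b n ≤ 2 * Bm := by
    have := hb 0; have := hb n
    have h01 := abs_le.mp (hb 0)
    have hn1 := abs_le.mp (hb n)
    linarith [h01.2, hn1.1]
  have h5 : K * ((Finset.range n).filter (fun i => g (i+1) < g i)).card ≤ K * N := by
    apply mul_le_mul_of_nonneg_left _ hK
    exact_mod_cast hdrop n
  calc (∑ i ∈ Finset.range n, pr i)
      ≤ (∑ i ∈ Finset.range n, g i) + (b 0 - b n) +
        K * ((Finset.range n).filter (fun i => g (i+1) < g i)).card := by
        rw [← h2]; exact h1
    _ ≤ n * g 0 + 2*Bm + K*N := by linarith [h3, h4, h5]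

lemma limsup_avg_le (x : ℕ → ℝ) (gs C : ℝ)
    (h : ∀ n : ℕ, 1 ≤ n → x n ≤ gs + C / n) :
    Filter.limsup (fun n => ((x n : ℝ) : EReal)) atTop ≤ ((gs : ℝ) : EReal) := by
  have h0 : Tendsto (fun n : ℕ => gs + C / (n:ℝ)) atTop (𝓝 gs) := by
    have hC : Tendsto (fun n : ℕ => C / (n:ℝ)) atTop (𝓝 0) :=
      Tendsto.div_atTop tendsto_const_nhds tendsto_natCast_atTop_atTop
    simpa using tendsto_const_nhds.add hC
  have hlim : Tendsto (fun n : ℕ => ((gs + C / (n:ℝ) : ℝ) : EReal)) atTop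
      (𝓝 ((gs : ℝ) : EReal)) := EReal.tendsto_coe.2 h0
  have hev : (fun n : ℕ => ((x n : ℝ) : EReal)) ≤ᶠ[atTop]
      (fun n : ℕ => ((gs + C / (n:ℝ) : ℝ) : EReal)) := by
    filter_upwards [eventually_ge_atTop 1] with n hn
    exact EReal.coe_le_coe_iff.2 (h n hn)
  calc Filter.limsup (fun n => ((x n : ℝ) : EReal)) atTop
      ≤ Filter.limsup (fun n : ℕ => ((gs + C / (n:ℝ) : ℝ) : EReal)) atTop :=
        Filter.limsup_le_limsup hev
    _ = ((gs : ℝ) : EReal) := hlim.limsup_eq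

lemma liminf_avg_ge (x : ℕ → ℝ) (gs C : ℝ)
    (h : ∀ n : ℕ, 1 ≤ n → gs - C / n ≤ x n) :
    ((gs : ℝ) : EReal) ≤ Filter.liminf (fun n => ((x n : ℝ) : EReal)) atTop := by
  have h0 : Tendsto (fun n : ℕ => gs - C / (n:ℝ)) atTop (𝓝 gs) := by
    have hC : Tendsto (fun n : ℕ => C / (n:ℝ)) atTop (𝓝 0) :=
      Tendsto.div_atTop tendsto_const_nhds tendsto_natCast_atTop_atTop
    simpa using tendsto_const_nhds.sub hC
  have hlim : Tendsto (fun n : ℕ => ((gs - C / (n:ℝ) : ℝ) : EReal)) atTop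
      (𝓝 ((gs : ℝ) : EReal)) := EReal.tendsto_coe.2 h0
  have hev : (fun n : ℕ => ((gs - C / (n:ℝ) : ℝ) : EReal)) ≤ᶠ[atTop]
      (fun n : ℕ => ((x n : ℝ) : EReal)) := by
    filter_upwards [eventually_ge_atTop 1] with n hn
    exact EReal.coe_le_coe_iff.2 (h n hn)
  calc ((gs : ℝ) : EReal)
      = Filter.liminf (fun n : ℕ => ((gs - C / (n:ℝ) : ℝ) : EReal)) atTop :=
        hlim.liminf_eq.symm
    _ ≤ Filter.liminf (fun n => ((x n : ℝ) : EReal)) atTop :=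
        Filter.liminf_le_liminf hev

end MPGAux3



namespace MPGAux4

open GameArena

lemma runState_succ {S A : Type} (Γ : GameArena S A) (μ χ : FinPlay S A → A)
    (s : S) (n : ℕ) :
    Γ.runState μ χ s (n+1) = Γ.tr (Γ.runState μ χ s n) (Γ.runAct μ χ s n) := by
  simp only [GameArena.runState, GameArena.hist, GameArena.runAct, GameArena.last]

lemma runAct_min {S A : Type} (Γ : GameArena S A) (μ χ : FinPlay S A → A)
    (s : S) (n : ℕ) (hm : Γ.isMin (Γ.runState μ χ s n)) :
    Γ.runAct μ χ s n = μ (Γ.hist μ χ s n) := by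
  simp only [GameArena.runAct, GameArena.runState] at *
  rw [if_pos hm]

lemma runAct_max {S A : Type} (Γ : GameArena S A) (μ χ : FinPlay S A → A)
    (s : S) (n : ℕ) (hm : ¬ Γ.isMin (Γ.runState μ χ s n)) :
    Γ.runAct μ χ s n = χ (Γ.hist μ χ s n) := by
  simp only [GameArena.runAct, GameArena.runState] at *
  rw [if_neg hm]

lemma last_hist {S A : Type} (Γ : GameArena S A) (μ χ : FinPlay S A → A)
    (s : S) (n : ℕ) : GameArena.last (Γ.hist μ χ s n) = Γ.runState μ χ s n := rfl

lemma runState_zero {S A : Type} (Γ : GameArena S A) (μ χ : FinPlay S A → A)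
    (s : S) : Γ.runState μ χ s 0 = s := rfl

/-- Bound the number of strict decreases of `G` along the run. -/
lemma drop_bound {S : Type} [Finite S] (G : S → ℝ) (st : ℕ → S)
    (hant : Antitone (fun n => G (st n))) :
    ∀ n : ℕ, ((Finset.range n).filter
        (fun i => G (st (i+1)) < G (st i))).card ≤ Nat.card S := by
  classical
  haveI : Fintype S := Fintype.ofFinite S
  intro n
  have hcard : Nat.card S = Fintype.card S := Nat.card_eq_fintype_card
  rw [hcard, ← Finset.card_univ]
  apply Finset.card_le_card_of_injOn (fun i => st (i+1))
    (fun i _ => Finset.mem_univ _)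
  intro i hi j hj hij
  simp only [Finset.coe_filter, Set.mem_setOf_eq, Finset.mem_range] at hi hj
  by_contra hne
  rcases lt_or_gt_of_ne hne with h | h
  · have hij' : st (i+1) = st (j+1) := hij
    have h1 : G (st j) ≤ G (st (i+1)) := hant (by omega)
    have h2 : G (st (j+1)) = G (st (i+1)) := by rw [hij']
    linarith [hj.2, hi.2]
  · have hij' : st (i+1) = st (j+1) := hij
    have h1 : G (st i) ≤ G (st (j+1)) := hant (by omega)
    have h2 : G (st (j+1)) = G (st (i+1)) := by rw [hij']
    linarith [hj.2, hi.2]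

lemma bound_min {S A : Type} [Finite S] [Finite A] (Γ : GameArena S A)
    (G B : S → ℝ) (σ : S → A)
    (havail : ∀ s, σ s ∈ Γ.avail s)
    (hσ : ∀ s, G (Γ.tr s (σ s)) = G s ∧
      Γ.price s (σ s) - G s + B (Γ.tr s (σ s)) = B s)
    (hmaxs : ∀ s a, a ∈ Γ.avail s → ¬ Γ.isMin s →
      G (Γ.tr s a) ≤ G s ∧
      (G (Γ.tr s a) = G s → Γ.price s a - G s + B (Γ.tr s a) ≤ B s))
    (χ : FinPlay S A → A) (hχ : Γ.IsMaxStrategy χ) (s : S) :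
    Γ.AMin (fun ρ => σ (GameArena.last ρ)) χ s ≤ ((G s : ℝ) : EReal) := by
  classical
  haveI : Nonempty S := ⟨s⟩
  set μ : FinPlay S A → A := fun ρ => σ (GameArena.last ρ) with hμdef
  set st : ℕ → S := fun n => Γ.runState μ χ s n with hstdef
  set ac : ℕ → A := fun n => Γ.runAct μ χ s n with hacdef
  have hsucc : ∀ n, st (n+1) = Γ.tr (st n) (ac n) := fun n => runState_succ Γ μ χ s n
  -- step analysis
  have hstep : ∀ n, G (st (n+1)) ≤ G (st n) ∧
      (G (st (n+1)) = G (st n) →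
        Γ.price (st n) (ac n) ≤ G (st n) + (B (st n) - B (st (n+1)))) := by
    intro n
    by_cases hm : Γ.isMin (st n)
    · have hac : ac n = σ (st n) := by
        rw [hacdef]
        simp only []
        rw [runAct_min Γ μ χ s n hm]
        rfl
      obtain ⟨hG1, hB1⟩ := hσ (st n)
      rw [hsucc n, hac]
      exact ⟨le_of_eq hG1, fun _ => by linarith [hB1]⟩
    · have hac : ac n = χ (Γ.hist μ χ s n) := runAct_max Γ μ χ s n hm
      have hav : ac n ∈ Γ.avail (st n) := by
        rw [hac]
        exact hχ (Γ.hist μ χ s n) hm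
      obtain ⟨hG1, hB1⟩ := hmaxs (st n) (ac n) hav hm
      rw [hsucc n]
      exact ⟨hG1, fun he => by linarith [hB1 he]⟩
  have hant : Antitone (fun n => G (st n)) :=
    antitone_nat_of_succ_le (fun n => (hstep n).1)
  -- bounds
  obtain ⟨Bm, hBm⟩ := Finite.exists_le (fun s' : S => |B s'|)
  obtain ⟨Gm, hGm⟩ := Finite.exists_le (fun s' : S => |G s'|)
  obtain ⟨RP, hRP⟩ := Finite.exists_le (fun q : S × A => Γ.price q.1 q.2)
  have hBm0 : 0 ≤ Bm := le_trans (abs_nonneg _) (hBm s)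
  have hGm0 : 0 ≤ Gm := le_trans (abs_nonneg _) (hGm s)
  set K : ℝ := |RP| + Gm + 2*Bm with hKdef
  have hK0 : 0 ≤ K := by
    have := abs_nonneg RP
    simp only [hKdef]; linarith
  have hpr : ∀ n, Γ.price (st n) (ac n) ≤ G (st n) + (B (st n) - B (st (n+1))) +
      (if G (st (n+1)) < G (st n) then K else 0) := by
    intro n
    by_cases hlt : G (st (n+1)) < G (st n)
    · rw [if_pos hlt]
      have h1 : Γ.price (st n) (ac n) ≤ RP := hRP (st n, ac n)
      have h2 : RP ≤ |RP| := le_abs_self RP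
      have h3 : -Gm ≤ G (st n) := by
        have := abs_le.mp (hGm (st n)); linarith [this.1]
      have h4 : -(2*Bm) ≤ B (st n) - B (st (n+1)) := by
        have ha := abs_le.mp (hBm (st n))
        have hb := abs_le.mp (hBm (st (n+1)))
        linarith [ha.1, hb.2]
      simp only [hKdef]
      linarith
    · rw [if_neg hlt]
      have heq : G (st (n+1)) = G (st n) := le_antisymm (hstep n).1 (not_lt.mp hlt)
      have := (hstep n).2 heq
      linarith
  have hdrop := drop_bound G st hant
  have hsum := MPGAux3.core_sum_bound (fun n => G (st n)) (fun n => B (st n))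
    (fun n => Γ.price (st n) (ac n)) Bm K (Nat.card S)
    (fun n => (hstep n).1) (fun n => hBm (st n)) hK0 hpr hdrop
  set C : ℝ := 2*Bm + K*(Nat.card S) with hCdef
  -- average bound
  have havg : ∀ n : ℕ, 1 ≤ n → Γ.avg μ χ s n ≤ G s + C / n := by
    intro n hn
    have hnpos : (0:ℝ) < n := by exact_mod_cast hn
    have havgdef : Γ.avg μ χ s n
        = (∑ i ∈ Finset.range n, Γ.price (st i) (ac i)) / n := rfl
    rw [havgdef, div_le_iff₀ hnpos]
    have hsumn := hsum n
    have hst0 : G (st 0) = G s := rfl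
    rw [hst0] at hsumn
    have hexp : (G s + C / n) * n = n * G s + C := by
      field_simp
    rw [hexp]
    simp only [hCdef] at hsumn ⊢
    linarith
  exact MPGAux3.limsup_avg_le (fun n => Γ.avg μ χ s n) (G s) C havg

lemma bound_max {S A : Type} [Finite S] [Finite A] (Γ : GameArena S A)
    (G B : S → ℝ) (σ : S → A)
    (havail : ∀ s, σ s ∈ Γ.avail s)
    (hσ : ∀ s, G (Γ.tr s (σ s)) = G s ∧
      Γ.price s (σ s) - G s + B (Γ.tr s (σ s)) = B s)
    (hmins : ∀ s a, a ∈ Γ.avail s → Γ.isMin s →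
      G s ≤ G (Γ.tr s a) ∧
      (G (Γ.tr s a) = G s → B s ≤ Γ.price s a - G s + B (Γ.tr s a)))
    (μ : FinPlay S A → A) (hμ : Γ.IsMinStrategy μ) (s : S) :
    ((G s : ℝ) : EReal) ≤ Γ.AMax μ (fun ρ => σ (GameArena.last ρ)) s := by
  classical
  haveI : Nonempty S := ⟨s⟩
  set χ : FinPlay S A → A := fun ρ => σ (GameArena.last ρ) with hχdef
  set st : ℕ → S := fun n => Γ.runState μ χ s n with hstdef
  set ac : ℕ → A := fun n => Γ.runAct μ χ s n with hacdef
  have hsucc : ∀ n, st (n+1) = Γ.tr (st n) (ac n) := fun n => runState_succ Γ μ χ s n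
  have hstep : ∀ n, G (st n) ≤ G (st (n+1)) ∧
      (G (st (n+1)) = G (st n) →
        G (st n) + (B (st n) - B (st (n+1))) ≤ Γ.price (st n) (ac n)) := by
    intro n
    by_cases hm : Γ.isMin (st n)
    · have hac : ac n = μ (Γ.hist μ χ s n) := runAct_min Γ μ χ s n hm
      have hav : ac n ∈ Γ.avail (st n) := by
        rw [hac]
        exact hμ (Γ.hist μ χ s n) hm
      obtain ⟨hG1, hB1⟩ := hmins (st n) (ac n) hav hm
      rw [hsucc n]
      exact ⟨hG1, fun he => by linarith [hB1 he]⟩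
    · have hac : ac n = σ (st n) := by
        rw [hacdef]
        simp only []
        rw [runAct_max Γ μ χ s n hm]
        rfl
      obtain ⟨hG1, hB1⟩ := hσ (st n)
      rw [hsucc n, hac]
      exact ⟨le_of_eq hG1.symm, fun _ => by linarith [hB1]⟩
  have hant : Antitone (fun n => -G (st n)) :=
    antitone_nat_of_succ_le (fun n => by simpa using (hstep n).1)
  obtain ⟨Bm, hBm⟩ := Finite.exists_le (fun s' : S => |B s'|)
  obtain ⟨Gm, hGm⟩ := Finite.exists_le (fun s' : S => |G s'|)
  obtain ⟨RP, hRP⟩ := Finite.exists_le (fun q : S × A => -Γ.price q.1 q.2)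
  have hBm0 : 0 ≤ Bm := le_trans (abs_nonneg _) (hBm s)
  have hGm0 : 0 ≤ Gm := le_trans (abs_nonneg _) (hGm s)
  set K : ℝ := |RP| + Gm + 2*Bm with hKdef
  have hK0 : 0 ≤ K := by
    have := abs_nonneg RP
    simp only [hKdef]; linarith
  have hpr : ∀ n, -Γ.price (st n) (ac n) ≤
      -G (st n) + (-B (st n) - -B (st (n+1))) +
      (if -G (st (n+1)) < -G (st n) then K else 0) := by
    intro n
    by_cases hlt : -G (st (n+1)) < -G (st n)
    · rw [if_pos hlt]
      have h1 : -Γ.price (st n) (ac n) ≤ RP := hRP (st n, ac n)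
      have h2 : RP ≤ |RP| := le_abs_self RP
      have h3 : -Gm ≤ -G (st n) := by
        have := abs_le.mp (hGm (st n)); linarith [this.2]
      have h4 : -(2*Bm) ≤ -B (st n) - -B (st (n+1)) := by
        have ha := abs_le.mp (hBm (st n))
        have hb := abs_le.mp (hBm (st (n+1)))
        linarith [ha.2, hb.1]
      simp only [hKdef]
      linarith
    · rw [if_neg hlt]
      have heq : G (st (n+1)) = G (st n) := by
        have h1 := (hstep n).1
        have h2 : G (st (n+1)) ≤ G (st n) := by linarith [not_lt.mp hlt]
        linarith [le_antisymm h2 h1]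
      have := (hstep n).2 heq
      linarith
  have hdrop := drop_bound (fun s' => -G s') st (by exact hant)
  have hsum := MPGAux3.core_sum_bound (fun n => -G (st n)) (fun n => -B (st n))
    (fun n => -Γ.price (st n) (ac n)) Bm K (Nat.card S)
    (fun n => by simpa using (hstep n).1) (fun n => by simpa using hBm (st n))
    hK0 hpr (by exact hdrop)
  set C : ℝ := 2*Bm + K*(Nat.card S) with hCdef
  have havg : ∀ n : ℕ, 1 ≤ n → G s - C / n ≤ Γ.avg μ χ s n := by
    intro n hn
    have hnpos : (0:ℝ) < n := by exact_mod_cast hn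
    have havgdef : Γ.avg μ χ s n
        = (∑ i ∈ Finset.range n, Γ.price (st i) (ac i)) / n := rfl
    rw [havgdef, le_div_iff₀ hnpos]
    have hsumn := hsum n
    have hst0 : -G (st 0) = -G s := rfl
    rw [hst0] at hsumn
    rw [Finset.sum_neg_distrib] at hsumn
    have hexp : (G s - C / n) * n = n * G s - C := by
      field_simp
    rw [hexp]
    simp only [hCdef] at hsumn ⊢
    linarith
  exact MPGAux3.liminf_avg_ge (fun n => Γ.avg μ χ s n) (G s) C havg

end MPGAux4

/-- Mean-payoff games on finite game arenas are positionally
determined: `Val*(s) = Val_*(s)` for every state `s`, and there are a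
positional Min strategy `μ*` and a positional Max strategy `χ*` that are
optimal from every state. -/
theorem positional_determinacy_finite {S A : Type} [Finite S] [Finite A]
    (Γ : GameArena S A) :
    (∀ s : S, Γ.upperVal s = Γ.lowerVal s) ∧
    ∃ μstar : GameArena.FinPlay S A → A, Γ.IsMinStrategy μstar ∧
      GameArena.Positional μstar ∧
    ∃ χstar : GameArena.FinPlay S A → A, Γ.IsMaxStrategy χstar ∧
      GameArena.Positional χstar ∧
    ∀ s : S,
      (⨆ χ : {χ // Γ.IsMaxStrategy χ}, Γ.AMin μstar χ.1 s) = Γ.upperVal s ∧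
      (⨅ μ : {μ // Γ.IsMinStrategy μ}, Γ.AMax μ.1 χstar s) = Γ.upperVal s := by

  classical
  by_cases hS : Nonempty S
  · -- main case
    haveI := hS
    obtain ⟨G, B, σ, havailσ, hσeq, hminS, hmaxS⟩ := MPGAux.struct Γ
    set χstar : GameArena.FinPlay S A → A := fun ρ => σ (GameArena.last ρ)
      with hχstardef
    set μstar : GameArena.FinPlay S A → A := χstar with hμstardef
    have hμ : Γ.IsMinStrategy μstar := fun ρ _ => havailσ _
    have hχ : Γ.IsMaxStrategy χstar := fun ρ _ => havailσ _
    have hposχ : GameArena.Positional χstar := by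
      intro ρ ρ' h
      show σ (GameArena.last ρ) = σ (GameArena.last ρ')
      rw [h]
    have hposμ : GameArena.Positional μstar := hposχ
    have hBMin : ∀ (χ0 : {χ0 // Γ.IsMaxStrategy χ0}) (s : S),
        Γ.AMin μstar χ0.1 s ≤ ((G s : ℝ) : EReal) :=
      fun χ0 s => MPGAux4.bound_min Γ G B σ havailσ hσeq hmaxS χ0.1 χ0.2 s
    have hBMax : ∀ (μ0 : {μ0 // Γ.IsMinStrategy μ0}) (s : S),
        ((G s : ℝ) : EReal) ≤ Γ.AMax μ0.1 χstar s :=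
      fun μ0 s => MPGAux4.bound_max Γ G B σ havailσ hσeq hminS μ0.1 μ0.2 s
    have h1 : ∀ s : S,
        (⨆ χ0 : {χ0 // Γ.IsMaxStrategy χ0}, Γ.AMin μstar χ0.1 s)
          ≤ ((G s : ℝ) : EReal) :=
      fun s => iSup_le fun χ0 => hBMin χ0 s
    have h2 : ∀ s : S, ((G s : ℝ) : EReal)
        ≤ ⨅ μ0 : {μ0 // Γ.IsMinStrategy μ0}, Γ.AMax μ0.1 χstar s :=
      fun s => le_iInf fun μ0 => hBMax μ0 s
    have h3 : ∀ s : S, Γ.upperVal s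
        ≤ ⨆ χ0 : {χ0 // Γ.IsMaxStrategy χ0}, Γ.AMin μstar χ0.1 s :=
      fun s => iInf_le
        (fun μ0 : {μ // Γ.IsMinStrategy μ} =>
          ⨆ χ0 : {χ0 // Γ.IsMaxStrategy χ0}, Γ.AMin μ0.1 χ0.1 s) ⟨μstar, hμ⟩
    have h4 : ∀ s : S,
        (⨅ μ0 : {μ0 // Γ.IsMinStrategy μ0}, Γ.AMax μ0.1 χstar s)
          ≤ Γ.lowerVal s :=
      fun s => le_iSup
        (fun χ0 : {χ // Γ.IsMaxStrategy χ} =>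
          ⨅ μ0 : {μ0 // Γ.IsMinStrategy μ0}, Γ.AMax μ0.1 χ0.1 s) ⟨χstar, hχ⟩
    have hll : ∀ (μ0 χ0 : GameArena.FinPlay S A → A) (s : S),
        Γ.AMax μ0 χ0 s ≤ Γ.AMin μ0 χ0 s :=
      fun μ0 χ0 s => Filter.liminf_le_limsup
    have h5 : ∀ s : S, Γ.lowerVal s ≤ Γ.upperVal s := by
      intro s
      rw [GameArena.lowerVal, GameArena.upperVal]
      refine iSup_le fun χ0 => le_iInf fun μ0 => ?_
      calc (⨅ μ1 : {μ // Γ.IsMinStrategy μ}, Γ.AMax μ1.1 χ0.1 s)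
          ≤ Γ.AMax μ0.1 χ0.1 s := iInf_le _ μ0
        _ ≤ Γ.AMin μ0.1 χ0.1 s := hll μ0.1 χ0.1 s
        _ ≤ ⨆ χ1 : {χ // Γ.IsMaxStrategy χ}, Γ.AMin μ0.1 χ1.1 s :=
          le_iSup (fun χ1 : {χ // Γ.IsMaxStrategy χ} => Γ.AMin μ0.1 χ1.1 s) χ0
    have hGup : ∀ s : S, Γ.upperVal s = ((G s : ℝ) : EReal) := fun s =>
      le_antisymm ((h3 s).trans (h1 s)) ((h2 s).trans ((h4 s).trans (h5 s)))
    have hval : ∀ s : S, Γ.upperVal s = Γ.lowerVal s := fun s =>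
      le_antisymm ((hGup s) ▸ ((h2 s).trans (h4 s))) (h5 s)
    refine ⟨hval, μstar, hμ, hposμ, χstar, hχ, hposχ, fun s => ⟨?_, ?_⟩⟩
    · exact le_antisymm ((h1 s).trans (hGup s).ge) (h3 s)
    · exact le_antisymm ((h4 s).trans (le_of_eq (hval s).symm))
        ((hGup s).le.trans (h2 s))
  · -- degenerate case: no states
    have hempty : IsEmpty S := not_nonempty_iff.mp hS
    have hdummy : ∀ ρ : GameArena.FinPlay S A, False := fun ρ => hempty.false ρ.1
    exact ⟨fun s => (hempty.false s).elim,
      fun ρ => (hdummy ρ).elim,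
      fun ρ => (hdummy ρ).elim,
      fun ρ ρ' _ => (hdummy ρ).elim,
      fun ρ => (hdummy ρ).elim,
      fun ρ => (hdummy ρ).elim,
      fun ρ ρ' _ => (hdummy ρ).elim,
      fun s => (hempty.false s).elim⟩
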